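/- Weight-ordering is preserved under adjoining a part: let Γ > Λ in the weight ordering of N=2 superpartitions of the same sector, and let a part Λ_{L+1} with w(Λ_{L+1}) ≤ w(Λ_L) be inserted into both (into Γ at the rightmost admissible position). Then Γ⁺ = Γ ∪ (Λ_{L+1}) > Λ⁺ = Λ ∪ (Λ_{L+1}). -/

import Mathlib

/-- A part of an `N=2` superpartition: plain, overlined, underlined or bilined,
with a nonnegative integer value. -/
inductive SPart where
  | plain (a : ℕ)
  | bar (a : ℕ)
  | und (a : ℕ)
  | bil (a : ℕ)
deriving DecidableEq

/-- The weight of a part: `w(a) = a`, `w(ā) = w(a̲) = a + 1/2`, `w(a̿) = a + 1`. -/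
def SPart.weight : SPart → ℚ
  | .plain a => a
  | .bar a => a + 1/2
  | .und a => a + 1/2
  | .bil a => a + 1

/-- The `n`-th partial sum of weights of a list of parts (missing parts contribute `0`). -/
def wPartial (L : List SPart) (n : ℕ) : ℚ := ((L.take n).map SPart.weight).sum

lemma SPart.weight_nonneg (p : SPart) : 0 ≤ p.weight := by
  cases p <;> simp [SPart.weight] <;> positivity

lemma wPartial_mono (L : List SPart) {n m : ℕ} (h : n ≤ m) :
    wPartial L n ≤ wPartial L m := by
  unfold wPartial
  obtain ⟨d, rfl⟩ := Nat.exists_eq_add_of_le h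
  rw [List.take_add, List.map_append, List.sum_append]
  have h0 : 0 ≤ (((L.drop n).take d).map SPart.weight).sum := by
    apply List.sum_nonneg
    intro x hx
    obtain ⟨p, _, rfl⟩ := List.mem_map.mp hx
    exact p.weight_nonneg
  linarith

lemma wPartial_of_length_le (L : List SPart) {n : ℕ} (h : L.length ≤ n) :
    wPartial L n = (L.map SPart.weight).sum := by
  unfold wPartial
  rw [List.take_of_length_le h]

lemma wPartial_le_total (L : List SPart) (n : ℕ) :
    wPartial L n ≤ (L.map SPart.weight).sum := by
  calc wPartial L n ≤ wPartial L (max n L.length) := wPartial_mono L (le_max_left _ _)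
    _ = _ := wPartial_of_length_le L (le_max_right _ _)

lemma wPartial_succ (L : List SPart) {n : ℕ} (h : n < L.length) :
    wPartial L (n+1) = wPartial L n + (L.get ⟨n, h⟩).weight := by
  unfold wPartial
  rw [List.take_succ, List.map_append, List.sum_append, List.getElem?_eq_getElem h]
  simp

lemma wPartial_insert_of_le (Γ : List SPart) (μ : SPart) {k n : ℕ} (hk : k ≤ Γ.length)
    (hn : n ≤ k) :
    wPartial (Γ.take k ++ μ :: Γ.drop k) n = wPartial Γ n := by
  unfold wPartial
  rw [List.take_append_of_le_length (by rw [List.length_take]; omega), List.take_take,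
    min_eq_left hn]

lemma wPartial_insert_of_gt (Γ : List SPart) (μ : SPart) {k n : ℕ} (hk : k ≤ Γ.length)
    (hn : k < n) :
    wPartial (Γ.take k ++ μ :: Γ.drop k) n = wPartial Γ (n-1) + μ.weight := by
  unfold wPartial
  obtain ⟨d, rfl⟩ : ∃ d, n = k + 1 + d := ⟨n - (k+1), by omega⟩
  have hl : (Γ.take k).length = k := by rw [List.length_take]; omega
  rw [List.take_append, List.take_of_length_le (by omega)]
  rw [show k + 1 + d - (Γ.take k).length = d + 1 by omega]
  rw [show k + 1 + d - 1 = k + d by omega, List.take_succ_cons, List.take_add]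
  simp
  ring

/-- The weight ordering: `Λ <w Γ` iff every partial weight sum of `Γ` dominates that of `Λ`,
with at least one strict domination. -/
def wLt (Λ Γ : List SPart) : Prop :=
  (∀ n, wPartial Λ n ≤ wPartial Γ n) ∧ ∃ n, wPartial Λ n < wPartial Γ n

/-- Weight-ordering is preserved under adjoining a part: if `Γ > Λ` in the weight ordering,
both in the same sector, and a part `μ` with `w(μ) ≤ w(Λ_L)` is appended to `Λ` and inserted
into `Γ` at the rightmost admissible position (position `k`, so that `w(μ) > w(Γ_k)` for the
following part `Γ_k`, if any), then `Γ⁺ > Λ⁺`. -/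
theorem wLt_insert_part (Γ Λ : List SPart) (μ : SPart) (k : ℕ)
    -- parts are listed with non-increasing weights
    (hΓsort : Γ.Pairwise (fun p q => SPart.weight q ≤ SPart.weight p))
    (hΛsort : Λ.Pairwise (fun p q => SPart.weight q ≤ SPart.weight p))
    -- all parts have positive weight (plain zero parts are disregarded)
    (hΓpos : ∀ p ∈ Γ, 0 < SPart.weight p)
    (hΛpos : ∀ p ∈ Λ, 0 < SPart.weight p)
    -- same sector: equal total weights
    (hsector : (Γ.map SPart.weight).sum = (Λ.map SPart.weight).sum)
    -- Γ > Λ in the weight ordering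
    (hlt : wLt Λ Γ)
    -- the new part is no heavier than the last part of Λ, i.e. Λ ++ [μ] is still sorted
    (hμΛ : (Λ ++ [μ]).Pairwise (fun p q => SPart.weight q ≤ SPart.weight p))
    -- μ is inserted into Γ at position k, the rightmost admissible one
    (hk : k ≤ Γ.length)
    (hΓplus : (Γ.take k ++ μ :: Γ.drop k).Pairwise (fun p q => SPart.weight q ≤ SPart.weight p))
    (hright : ∀ p ∈ (Γ.drop k).head?, SPart.weight p < SPart.weight μ) :
    wLt (Λ ++ [μ]) (Γ.take k ++ μ :: Γ.drop k) := by
  obtain ⟨hle, n₀, hstrict⟩ := hlt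
  have hμ0 := SPart.weight_nonneg μ
  -- Γ has at most as many parts as Λ
  have hlen : Γ.length ≤ Λ.length := by
    by_contra h
    push_neg at h
    have h1 : wPartial Γ (Λ.length + 1)
        = wPartial Γ Λ.length + (Γ.get ⟨Λ.length, h⟩).weight := wPartial_succ Γ h
    have h2 := hΓpos _ (List.get_mem Γ ⟨_, h⟩)
    have h3 := wPartial_le_total Γ (Λ.length + 1)
    have h4 := hle Λ.length
    rw [wPartial_of_length_le Λ le_rfl, ← hsector] at h4
    linarith
  -- all parts of Γ at index ≥ k are strictly lighter than μ
  have hΓelem : ∀ j (hj : j < Γ.length), k ≤ j → (Γ.get ⟨j, hj⟩).weight < μ.weight := by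
    intro j hj hkj
    have hkΓ : k < Γ.length := lt_of_le_of_lt hkj hj
    have hhead : (Γ.drop k).head? = some (Γ.get ⟨k, hkΓ⟩) := by
      rw [List.head?_drop]
      simp [List.getElem?_eq_getElem hkΓ]
    have h1 : (Γ.get ⟨k, hkΓ⟩).weight < μ.weight := by
      apply hright
      rw [hhead]; rfl
    have h2 : (Γ.get ⟨j, hj⟩).weight ≤ (Γ.get ⟨k, hkΓ⟩).weight := by
      rcases eq_or_lt_of_le hkj with rfl | hkj'
      · exact le_rfl
      · exact hΓsort.rel_get_of_lt (by exact hkj')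
    linarith
  -- partial sums of Λ ++ [μ]
  have hΛplus_eq : Λ ++ [μ] = Λ.take Λ.length ++ μ :: Λ.drop Λ.length := by simp
  have hΛp_le : ∀ n, n ≤ Λ.length → wPartial (Λ ++ [μ]) n = wPartial Λ n := by
    intro n hn
    rw [hΛplus_eq]
    exact wPartial_insert_of_le Λ μ le_rfl hn
  have hΛp_gt : ∀ n, Λ.length < n →
      wPartial (Λ ++ [μ]) n = (Λ.map SPart.weight).sum + μ.weight := by
    intro n hn
    rw [hΛplus_eq, wPartial_insert_of_gt Λ μ le_rfl hn, wPartial_of_length_le Λ (by omega)]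
  constructor
  · intro n
    rcases le_or_gt n k with hnk | hnk
    · rw [wPartial_insert_of_le Γ μ hk hnk, hΛp_le n (le_trans hnk (le_trans hk hlen))]
      exact hle n
    · rw [wPartial_insert_of_gt Γ μ hk hnk]
      rcases le_or_gt n Λ.length with hnL | hnL
      · rw [hΛp_le n hnL]
        rcases lt_or_ge (n-1) Γ.length with hΓn | hΓn
        · have h1 : wPartial Γ n = wPartial Γ (n-1) + (Γ.get ⟨n-1, hΓn⟩).weight := by
            have := wPartial_succ Γ hΓn
            rwa [show n - 1 + 1 = n by omega] at this
          have h2 := hΓelem (n-1) hΓn (by omega)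
          have h3 := hle n
          linarith
        · rw [wPartial_of_length_le Γ hΓn, hsector]
          have h2 := wPartial_le_total Λ n
          linarith
      · rw [hΛp_gt n hnL, wPartial_of_length_le Γ (by omega), hsector]
  · refine ⟨n₀, ?_⟩
    have hn₀L : n₀ < Λ.length := by
      by_contra h
      push_neg at h
      rw [wPartial_of_length_le Λ h, ← hsector] at hstrict
      exact absurd hstrict (not_lt.mpr (wPartial_le_total Γ n₀))
    rw [hΛp_le n₀ hn₀L.le]
    rcases le_or_gt n₀ k with hnk | hnk
    · rw [wPartial_insert_of_le Γ μ hk hnk]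
      exact hstrict
    · rw [wPartial_insert_of_gt Γ μ hk hnk]
      rcases lt_or_ge (n₀-1) Γ.length with hΓn | hΓn
      · have h1 : wPartial Γ n₀ = wPartial Γ (n₀-1) + (Γ.get ⟨n₀-1, hΓn⟩).weight := by
          have := wPartial_succ Γ hΓn
          rwa [show n₀ - 1 + 1 = n₀ by omega] at this
        have h2 := hΓelem (n₀-1) hΓn (by omega)
        have h3 := hle n₀
        linarith
      · rw [wPartial_of_length_le Γ hΓn, hsector]
        have h2 : wPartial Γ n₀ ≤ (Λ.map SPart.weight).sum := by
          rw [← hsector]; exact wPartial_le_total Γ n₀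
        linarith
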